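/- J_G = L_G if and only if G is a complete multipartite graph with all parts of size at most 3. -/

import Mathlib

open MvPolynomial

section KempePrelim

variable {V : Type} 

/-- A proper `k`-coloring. -/
def IsColoring (G : SimpleGraph V) (k : ℕ) (f : V → Fin k) : Prop :=
  ∀ ⦃u v : V⦄, G.Adj u v → f u ≠ f v

/-- `g` is obtained from `f` by a Kempe switching: swap colors `i` and `j` on
one connected component of the subgraph induced on `f⁻¹(i) ∪ f⁻¹(j)`. -/
def KempeSwitch (G : SimpleGraph V) {k : ℕ} (f g : V → Fin k) : Prop :=
  ∃ i j : Fin k, ∃ C : Set V,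
    (∃ comp : (G.induce {v | f v = i ∨ f v = j}).ConnectedComponent,
      C = Subtype.val '' comp.supp) ∧
    (∀ v ∈ C, (f v = i → g v = j) ∧ (f v = j → g v = i)) ∧
    (∀ v ∉ C, g v = f v)

/-- A single step of Kempe equivalence between proper `k`-colorings. -/
def KempeStep (G : SimpleGraph V) {k : ℕ} (f g : V → Fin k) : Prop :=
  IsColoring G k f ∧ IsColoring G k g ∧ KempeSwitch G f g

/-- Kempe equivalence of `k`-colorings. -/
def KempeEquiv (G : SimpleGraph V) {k : ℕ} (f g : V → Fin k) : Prop :=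
  Relation.ReflTransGen (KempeStep G) f g

/-- The type of proper `k`-colorings of `G`. -/
def ProperColoring (G : SimpleGraph V) (k : ℕ) : Type _ :=
  {f : V → Fin k // IsColoring G k f}

/-- The number of Kempe classes of `k`-colorings of `G`. -/
noncomputable def Kc (G : SimpleGraph V) (k : ℕ) : ℕ :=
  Nat.card (Quot (fun f g : ProperColoring G k => KempeEquiv G f.1 g.1))

/-- The stable (independent) sets of `G`, as a type indexing variables. -/
def StableSet (G : SimpleGraph V) : Type _ :=
  {s : Finset V // ∀ ⦃i⦄, i ∈ s → ∀ ⦃j⦄, j ∈ s → ¬ G.Adj i j}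

def emptyStable (G : SimpleGraph V) : StableSet G :=
  ⟨∅, by intro i hi; simp at hi⟩

def singleStable (G : SimpleGraph V) (i : V) : StableSet G :=
  ⟨{i}, by
    intro a ha b hb
    simp only [Finset.mem_singleton] at ha hb
    rw [ha, hb]
    exact G.loopless.irrefl i⟩

def eraseStable (G : SimpleGraph V) [DecidableEq V] (S : StableSet G) (i : V) : StableSet G :=
  ⟨S.1.erase i, fun _ ha _ hb => S.2 (Finset.mem_of_mem_erase ha) (Finset.mem_of_mem_erase hb)⟩

variable (K : Type) [Field K]

/-- The monoid algebra map `x_S ↦ t^{ρ(S)} s`, into `K[t₁,…,t_d,s]`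
(realized as `MvPolynomial (Option V) K`, with `none` playing the role of `s`). -/
noncomputable def piMap (G : SimpleGraph V) :
    MvPolynomial (StableSet G) K →ₐ[K] MvPolynomial (Option V) K :=
  aeval fun S : StableSet G => (∏ i ∈ S.1, X (some i)) * X (none : Option V)

/-- The toric ideal `I_G` of the stable set ring. -/
noncomputable def toricIdeal (G : SimpleGraph V) : Ideal (MvPolynomial (StableSet G) K) :=
  RingHom.ker (piMap K G).toRingHom

/-- The ideal `L_G`. -/
noncomputable def idealL (G : SimpleGraph V) [DecidableEq V] :
    Ideal (MvPolynomial (StableSet G) K) :=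
  Ideal.span {p | ∃ (S : StableSet G) (i : V), i ∈ S.1 ∧ 2 ≤ S.1.card ∧
    p = X (eraseStable G S i) * X (singleStable G i) - X S * X (emptyStable G)}

/-- The 2-coloring ideal `J_G`. -/
noncomputable def idealJ (G : SimpleGraph V) [DecidableEq V] :
    Ideal (MvPolynomial (StableSet G) K) :=
  Ideal.span {p | ∃ S₁ S₂ S₃ S₄ : StableSet G,
    Disjoint S₁.1 S₂.1 ∧ Disjoint S₃.1 S₄.1 ∧ S₁.1 ∪ S₂.1 = S₃.1 ∪ S₄.1 ∧
    p = X S₁ * X S₂ - X S₃ * X S₄}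

/-- The ideal `⟨[I_G]₂⟩` generated by all quadratic binomials of `I_G`. -/
noncomputable def quadPart (G : SimpleGraph V) : Ideal (MvPolynomial (StableSet G) K) :=
  Ideal.span {p | (∃ S₁ S₂ S₃ S₄ : StableSet G, p = X S₁ * X S₂ - X S₃ * X S₄) ∧
    p ∈ toricIdeal K G}

/-- The monomial ideal `M_G`. -/
noncomputable def idealM (G : SimpleGraph V) [DecidableEq V] :
    Ideal (MvPolynomial (StableSet G) K) :=
  Ideal.span {p | ∃ S T : StableSet G, (S.1 ∩ T.1).Nonempty ∧ p = X S * X T}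

/-- The Kempe ideal `K_G = J_G + M_G`. -/
noncomputable def kempeIdeal (G : SimpleGraph V) [DecidableEq V] :
    Ideal (MvPolynomial (StableSet G) K) :=
  idealJ K G + idealM K G

/-- The color class of a proper coloring, as a stable set. -/
def colorClass (G : SimpleGraph V) [Fintype V] [DecidableEq V] {k : ℕ}
    (f : V → Fin k) (hf : IsColoring G k f) (c : Fin k) : StableSet G :=
  ⟨Finset.univ.filter (fun v => f v = c), by
    intro a ha b hb hadj
    simp only [Finset.mem_filter] at ha hb
    exact hf hadj (ha.2.trans hb.2.symm)⟩

/-- The monomial `x_f` associated with a proper `k`-coloring `f`. -/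
noncomputable def xMonomial (G : SimpleGraph V) [Fintype V] [DecidableEq V] {k : ℕ}
    (f : V → Fin k) (hf : IsColoring G k f) : MvPolynomial (StableSet G) K :=
  ∏ c : Fin k, X (colorClass G f hf c)

/-- The Hilbert function `k ↦ dim_K (R/I)_k` of a quotient of `R[G]`. -/
noncomputable def hilbertFn (G : SimpleGraph V)
    (I : Ideal (MvPolynomial (StableSet G) K)) (k : ℕ) : ℕ :=
  Module.finrank K (Submodule.map (Ideal.Quotient.mkₐ K I).toLinearMap
    (homogeneousSubmodule (StableSet G) K k))

end KempePrelim

section Aux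

open Finsupp

variable {d : ℕ} {G : SimpleGraph (Fin d)} (K : Type) [Field K]

lemma XX_eq (A B : StableSet G) :
    (X A * X B : MvPolynomial (StableSet G) K) =
      monomial (Finsupp.single A 1 + Finsupp.single B 1) 1 := by
  rw [X, X, monomial_mul, one_mul]

lemma coeff_L_zero (m : StableSet G →₀ ℕ)
    (hm : ∀ (S : StableSet G) (i : Fin d), i ∈ S.1 → 2 ≤ S.1.card →
      ¬ (Finsupp.single (eraseStable G S i) 1 + Finsupp.single (singleStable G i) 1 ≤ m) ∧
      ¬ (Finsupp.single S 1 + Finsupp.single (emptyStable G) 1 ≤ m))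
    {p : MvPolynomial (StableSet G) K} (hp : p ∈ idealL K G) :
    MvPolynomial.coeff m p = 0 := by
  rw [idealL, Ideal.span, Submodule.mem_span_set] at hp
  obtain ⟨c, hsupp, rfl⟩ := hp
  rw [Finsupp.sum, MvPolynomial.coeff_sum]
  refine Finset.sum_eq_zero fun g hg => ?_
  obtain ⟨S, i, hi, hcard, rfl⟩ := hsupp hg
  have h₁ := (hm S i hi hcard).1
  have h₂ := (hm S i hi hcard).2
  rw [smul_eq_mul, mul_sub, MvPolynomial.coeff_sub,
    XX_eq, XX_eq, MvPolynomial.coeff_mul_monomial', MvPolynomial.coeff_mul_monomial',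
    if_neg h₁, if_neg h₂, sub_zero]

lemma single_add_single_apply {α : Type*} [DecidableEq α] (u v w : α) :
    (Finsupp.single u 1 + Finsupp.single v 1 : α →₀ ℕ) w =
      (if u = w then 1 else 0) + (if v = w then 1 else 0) := by
  simp [Finsupp.single_apply]

lemma erase_ne_single (S : StableSet G) (i : Fin d) :
    eraseStable G S i ≠ singleStable G i := by
  intro h
  have h' := congrArg Subtype.val h
  have : i ∈ S.1.erase i := by
    rw [show (eraseStable G S i).1 = S.1.erase i from rfl] at h'
    rw [h']; exact Finset.mem_singleton_self i
  exact (Finset.notMem_erase i S.1) this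

lemma single_card_ne {A : StableSet G} (hA : 2 ≤ A.1.card) (i : Fin d) :
    A ≠ singleStable G i := by
  intro h
  rw [h] at hA
  simp [singleStable] at hA

lemma nonempty_ne_empty {A : StableSet G} (hA : A.1.Nonempty) :
    A ≠ emptyStable G := by
  intro h
  rw [h] at hA
  simp [emptyStable] at hA

/-- Non-vanishing lemma, mixed case: `m = x_A x_{c}` with `|A| ≥ 2`,
some `x ∈ A` adjacent to `c`. -/
lemma coeff_L_zero_mixed (A : StableSet G) (c x : Fin d)
    (hA : 2 ≤ A.1.card) (hx : x ∈ A.1) (hadj : G.Adj x c)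
    {p : MvPolynomial (StableSet G) K} (hp : p ∈ idealL K G) :
    MvPolynomial.coeff (Finsupp.single A 1 + Finsupp.single (singleStable G c) 1) p = 0 := by
  classical
  refine coeff_L_zero K _ (fun S i hi hcard => ⟨?_, ?_⟩) hp
  · intro hle
    have h1 := Finsupp.le_def.1 hle (singleStable G i)
    rw [single_add_single_apply, single_add_single_apply, if_pos rfl,
      if_neg (erase_ne_single S i), if_neg (single_card_ne hA i)] at h1
    have hci : singleStable G c = singleStable G i := by
      by_contra hne
      rw [if_neg hne] at h1
      omega
    have hci' : c = i := by
      have := congrArg Subtype.val hci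
      simpa [singleStable] using this
    subst hci'
    have h2 := Finsupp.le_def.1 hle (eraseStable G S c)
    rw [single_add_single_apply, single_add_single_apply, if_pos rfl] at h2
    have hAE : A = eraseStable G S c := by
      by_contra hne
      rw [if_neg hne] at h2
      split_ifs at h2 <;> omega
    have hxS : x ∈ S.1 := by
      have hv := congrArg Subtype.val hAE
      rw [show (eraseStable G S c).1 = S.1.erase c from rfl] at hv
      rw [hv] at hx
      exact Finset.mem_of_mem_erase hx
    exact S.2 hxS hi hadj
  · intro hle
    have hAne : A ≠ emptyStable G :=
      nonempty_ne_empty (Finset.card_pos.1 (by omega : 0 < A.1.card))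
    have hcne : singleStable G c ≠ emptyStable G :=
      nonempty_ne_empty (Finset.singleton_nonempty c)
    have h1 := Finsupp.le_def.1 hle (emptyStable G)
    rw [single_add_single_apply, single_add_single_apply, if_pos rfl,
      if_neg hAne, if_neg hcne] at h1
    split_ifs at h1 <;> omega

/-- Non-vanishing lemma, pair case: `m = x_A x_B` with `|A|, |B| ≥ 2`. -/
lemma coeff_L_zero_pairs (A B : StableSet G)
    (hA : 2 ≤ A.1.card) (hB : 2 ≤ B.1.card)
    {p : MvPolynomial (StableSet G) K} (hp : p ∈ idealL K G) :
    MvPolynomial.coeff (Finsupp.single A 1 + Finsupp.single B 1) p = 0 := by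
  classical
  refine coeff_L_zero K _ (fun S i hi hcard => ⟨?_, ?_⟩) hp
  · intro hle
    have h1 := Finsupp.le_def.1 hle (singleStable G i)
    rw [single_add_single_apply, single_add_single_apply, if_pos rfl,
      if_neg (single_card_ne hA i), if_neg (single_card_ne hB i)] at h1
    split_ifs at h1 <;> omega
  · intro hle
    have h1 := Finsupp.le_def.1 hle (emptyStable G)
    rw [single_add_single_apply, single_add_single_apply, if_pos rfl,
      if_neg (nonempty_ne_empty (Finset.card_pos.1 (by omega : 0 < A.1.card))),
      if_neg (nonempty_ne_empty (Finset.card_pos.1 (by omega : 0 < B.1.card)))] at h1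
    split_ifs at h1 <;> omega
lemma L_le_J : idealL K G ≤ idealJ K G := by
  rw [idealL, Ideal.span_le]
  rintro p ⟨S, i, hi, hc, rfl⟩
  apply Ideal.subset_span
  refine ⟨eraseStable G S i, singleStable G i, S, emptyStable G, ?_, ?_, ?_, rfl⟩
  · simp [eraseStable, singleStable, Finset.disjoint_singleton_right]
  · simp [emptyStable]
  · show S.1.erase i ∪ {i} = S.1 ∪ ∅
    rw [Finset.union_empty]
    ext x
    simp only [Finset.mem_union, Finset.mem_singleton, Finset.mem_erase]
    constructor
    · rintro (⟨_, h⟩ | rfl)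
      · exact h
      · exact hi
    · intro h
      rcases eq_or_ne x i with rfl | hxi
      · exact Or.inr rfl
      · exact Or.inl ⟨hxi, h⟩

variable {t : ℕ} {P : Fin d → Fin t}

lemma stable_mono (hP : ∀ u v : Fin d, G.Adj u v ↔ P u ≠ P v)
    (T : StableSet G) {x y : Fin d} (hx : x ∈ T.1) (hy : y ∈ T.1) : P x = P y := by
  by_contra h
  exact T.2 hx hy ((hP x y).2 h)

lemma caseA_single (Wst A B : StableSet G) (hAne : A.1.Nonempty)
    (hd : Disjoint A.1 B.1) (hU : A.1 ∪ B.1 = Wst.1) (hB : B.1.card = 1) :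
    X A * X B - X Wst * X (emptyStable G) ∈ idealL K G := by
  obtain ⟨i, hBi⟩ := Finset.card_eq_one.1 hB
  have hiB : i ∈ B.1 := by rw [hBi]; exact Finset.mem_singleton_self i
  have hiA : i ∉ A.1 := Finset.disjoint_right.1 hd hiB
  have hiW : i ∈ Wst.1 := by rw [← hU]; exact Finset.mem_union_right _ hiB
  have hcard : 2 ≤ Wst.1.card := by
    rw [← hU, Finset.card_union_of_disjoint hd, hBi, Finset.card_singleton]
    have := Finset.card_pos.2 hAne
    omega
  have heras : eraseStable G Wst i = A := by
    apply Subtype.ext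
    show Wst.1.erase i = A.1
    rw [← hU, hBi]
    ext x
    simp only [Finset.mem_erase, Finset.mem_union, Finset.mem_singleton]
    constructor
    · rintro ⟨hxi, hx | rfl⟩
      · exact hx
      · exact absurd rfl hxi
    · intro hx
      exact ⟨fun h => hiA (h ▸ hx), Or.inl hx⟩
  have hsing : singleStable G i = B := by
    apply Subtype.ext
    show {i} = B.1
    rw [hBi]
  apply Ideal.subset_span
  exact ⟨Wst, i, hiW, hcard, by rw [heras, hsing]⟩

lemma caseA_binom (Wst : StableSet G) (hW3 : Wst.1.card ≤ 3)
    (A B : StableSet G) (hd : Disjoint A.1 B.1) (hU : A.1 ∪ B.1 = Wst.1) :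
    X A * X B - X Wst * X (emptyStable G) ∈ idealL K G := by
  rcases B.1.eq_empty_or_nonempty with hBe | hBne
  · have hBeq : B = emptyStable G := Subtype.ext hBe
    have hAeq : A = Wst := Subtype.ext (by rw [← hU, hBe, Finset.union_empty])
    rw [hBeq, hAeq, sub_self]
    exact zero_mem _
  · rcases A.1.eq_empty_or_nonempty with hAe | hAne
    · have hAeq : A = emptyStable G := Subtype.ext hAe
      have hBeq : B = Wst := Subtype.ext (by rw [← hU, hAe, Finset.empty_union])
      rw [hAeq, hBeq]
      have : X (emptyStable G) * X Wst - X Wst * X (emptyStable G)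
          = (0 : MvPolynomial (StableSet G) K) := by ring
      rw [this]
      exact zero_mem _
    · have hcards : A.1.card + B.1.card ≤ 3 := by
        rw [← Finset.card_union_of_disjoint hd, hU]; exact hW3
      have h1 : 1 ≤ A.1.card := Finset.card_pos.2 hAne
      have h2 : 1 ≤ B.1.card := Finset.card_pos.2 hBne
      by_cases hB1 : B.1.card = 1
      · exact caseA_single K Wst A B hAne hd hU hB1
      · have hA1 : A.1.card = 1 := by omega
        have := caseA_single K Wst B A hBne hd.symm
          (by rw [Finset.union_comm]; exact hU) hA1
        rw [mul_comm (X A) (X B)]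
        exact this

lemma J_le_L (hP : ∀ u v : Fin d, G.Adj u v ↔ P u ≠ P v)
    (hfib : ∀ c : Fin t, (Finset.univ.filter (fun v => P v = c)).card ≤ 3) :
    idealJ K G ≤ idealL K G := by
  rw [idealJ, Ideal.span_le]
  rintro p ⟨S₁, S₂, S₃, S₄, h12, h34, hU, rfl⟩
  by_cases hmono : ∀ x ∈ S₁.1 ∪ S₂.1, ∀ y ∈ S₁.1 ∪ S₂.1, P x = P y
  · set Wst : StableSet G := ⟨S₁.1 ∪ S₂.1,
      fun x hx y hy hadj => (hP x y).1 hadj (hmono x hx y hy)⟩ with hWst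
    have hW3 : Wst.1.card ≤ 3 := by
      rcases (S₁.1 ∪ S₂.1).eq_empty_or_nonempty with he | ⟨u0, hu0⟩
      · show (S₁.1 ∪ S₂.1).card ≤ 3
        rw [he]; simp
      · refine le_trans (Finset.card_le_card ?_) (hfib (P u0))
        intro x hx
        exact Finset.mem_filter.2 ⟨Finset.mem_univ x, hmono x hx u0 hu0⟩
    have m1 := caseA_binom K Wst hW3 S₁ S₂ h12 rfl
    have m2 := caseA_binom K Wst hW3 S₃ S₄ h34 hU.symm
    have := Ideal.sub_mem _ m1 m2
    rwa [sub_sub_sub_cancel_right] at this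
  · push_neg at hmono
    obtain ⟨u, hu, v, hv, huv⟩ := hmono
    have hne : ∀ (A B : StableSet G), A.1 ∪ B.1 = S₁.1 ∪ S₂.1 → A.1.Nonempty := by
      intro A B hU'
      rcases A.1.eq_empty_or_nonempty with hAe | hAne
      · exfalso
        rw [hAe, Finset.empty_union] at hU'
        exact huv (stable_mono hP B (hU' ▸ hu) (hU' ▸ hv))
      · exact hAne
    have filter_eq : ∀ (A B : StableSet G), Disjoint A.1 B.1 →
        A.1 ∪ B.1 = S₁.1 ∪ S₂.1 → ∀ a ∈ A.1,
        A.1 = (S₁.1 ∪ S₂.1).filter (fun x => P x = P a) := by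
      intro A B hd hU' a ha
      ext x
      simp only [Finset.mem_filter]
      constructor
      · intro hxA
        exact ⟨hU' ▸ Finset.mem_union_left _ hxA, stable_mono hP A hxA ha⟩
      · rintro ⟨hxW, hPx⟩
        rw [← hU'] at hxW
        rcases Finset.mem_union.1 hxW with h | h
        · exact h
        · exfalso
          apply huv
          have hall : ∀ w ∈ S₁.1 ∪ S₂.1, P w = P a := by
            intro w hw
            rw [← hU'] at hw
            rcases Finset.mem_union.1 hw with h' | h'
            · exact stable_mono hP A h' ha
            · exact (stable_mono hP B h' h).trans hPx
          rw [hall u hu, hall v hv]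
    obtain ⟨a₁, ha₁⟩ := hne S₁ S₂ rfl
    obtain ⟨a₂, ha₂⟩ := hne S₂ S₁ (by rw [Finset.union_comm])
    obtain ⟨a₃, ha₃⟩ := hne S₃ S₄ hU.symm
    obtain ⟨a₄, ha₄⟩ := hne S₄ S₃ (by rw [Finset.union_comm]; exact hU.symm)
    have f₁ := filter_eq S₁ S₂ h12 rfl a₁ ha₁
    have f₂ := filter_eq S₂ S₁ h12.symm (by rw [Finset.union_comm]) a₂ ha₂
    have f₃ := filter_eq S₃ S₄ h34 hU.symm a₃ ha₃
    have f₄ := filter_eq S₄ S₃ h34.symm (by rw [Finset.union_comm]; exact hU.symm) a₄ ha₄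
    have ha₃W : a₃ ∈ S₁.1 ∪ S₂.1 := hU ▸ Finset.mem_union_left _ ha₃
    have ha₄W : a₄ ∈ S₁.1 ∪ S₂.1 := hU ▸ Finset.mem_union_right _ ha₄
    rcases Finset.mem_union.1 ha₃W with h3 | h3
    · have hS₃ : S₃ = S₁ := by
        apply Subtype.ext
        rw [f₃, stable_mono hP S₁ h3 ha₁]
        exact f₁.symm
      have hS₄ : S₄ = S₂ := by
        apply Subtype.ext
        rcases Finset.mem_union.1 ha₄W with h4 | h4
        · exfalso
          have : a₄ ∈ S₃.1 := by rw [hS₃]; exact h4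
          exact Finset.disjoint_left.1 h34 this ha₄
        · rw [f₄, stable_mono hP S₂ h4 ha₂]
          exact f₂.symm
      rw [hS₃, hS₄, sub_self]
      exact zero_mem _
    · have hS₃ : S₃ = S₂ := by
        apply Subtype.ext
        rw [f₃, stable_mono hP S₂ h3 ha₂]
        exact f₂.symm
      have hS₄ : S₄ = S₁ := by
        apply Subtype.ext
        rcases Finset.mem_union.1 ha₄W with h4 | h4
        · rw [f₄, stable_mono hP S₁ h4 ha₁]
          exact f₁.symm
        · exfalso
          have : a₄ ∈ S₃.1 := by rw [hS₃]; exact h4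
          exact Finset.disjoint_left.1 h34 this ha₄
      rw [hS₃, hS₄]
      have : X S₁ * X S₂ - X S₂ * X S₁ = (0 : MvPolynomial (StableSet G) K) := by ring
      rw [this]
      exact zero_mem _
def pairSt (x y : Fin d) (h1 : ¬ G.Adj x y) : StableSet G :=
  ⟨{x, y}, by
    intro u hu v hv huv
    simp only [Finset.mem_insert, Finset.mem_singleton] at hu hv
    rcases hu with rfl | rfl <;> rcases hv with rfl | rfl
    exacts [G.loopless.irrefl _ huv, h1 huv, h1 huv.symm, G.loopless.irrefl _ huv]⟩

lemma pairSt_card {x y : Fin d} (hxy : x ≠ y) (h1 : ¬ G.Adj x y) :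
    (pairSt x y h1).1.card = 2 := Finset.card_pair hxy

lemma pairSt_ne {x y u v : Fin d} {h1 h2} (hyu : y ≠ u) (hyv : y ≠ v) :
    pairSt (G := G) x y h1 ≠ pairSt u v h2 := by
  intro h
  have hval := congrArg Subtype.val h
  have : y ∈ ({u, v} : Finset (Fin d)) := by
    rw [show ({u,v} : Finset (Fin d)) = (pairSt (G := G) u v h2).1 from rfl, ← hval]
    simp [pairSt]
  simp only [Finset.mem_insert, Finset.mem_singleton] at this
  tauto

lemma no_induced_P3 (hJL : idealJ K G = idealL K G)
    {a b c : Fin d} (hab : a ≠ b) (hbc : b ≠ c)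
    (hnab : ¬ G.Adj a b) (hnbc : ¬ G.Adj b c) (hac : G.Adj a c) : False := by
  classical
  have hca : a ≠ c := G.ne_of_adj hac
  set A : StableSet G := pairSt a b hnab with hA
  set B : StableSet G := pairSt b c hnbc with hB
  have hJ : X A * X (singleStable G c) - X B * X (singleStable G a) ∈ idealJ K G := by
    apply Ideal.subset_span
    refine ⟨A, singleStable G c, B, singleStable G a, ?_, ?_, ?_, rfl⟩
    · show Disjoint ({a, b} : Finset (Fin d)) {c}
      rw [Finset.disjoint_singleton_right]
      simp only [Finset.mem_insert, Finset.mem_singleton]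
      push_neg
      exact ⟨fun h => hca h.symm, fun h => hbc h.symm⟩
    · show Disjoint ({b, c} : Finset (Fin d)) {a}
      rw [Finset.disjoint_singleton_right]
      simp only [Finset.mem_insert, Finset.mem_singleton]
      push_neg
      exact ⟨hab, hca⟩
    · show ({a, b} : Finset (Fin d)) ∪ {c} = {b, c} ∪ {a}
      ext w
      simp only [Finset.mem_union, Finset.mem_insert, Finset.mem_singleton]
      tauto
  have hL : X A * X (singleStable G c) - X B * X (singleStable G a) ∈ idealL K G :=
    hJL ▸ hJ
  have h0 := coeff_L_zero_mixed K A c a (by rw [hA, pairSt_card hab]) (by simp [hA, pairSt]) hac hL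
  have hne : ¬ (Finsupp.single B 1 + Finsupp.single (singleStable G a) 1 =
      Finsupp.single A 1 + Finsupp.single (singleStable G c) 1) := by
    intro h
    have happ := congrArg (fun g => g (singleStable G a)) h
    rw [single_add_single_apply, single_add_single_apply, if_pos rfl] at happ
    have h1 : B ≠ singleStable G a := single_card_ne (by rw [hB, pairSt_card hbc]) a
    have h2 : A ≠ singleStable G a := single_card_ne (by rw [hA, pairSt_card hab]) a
    have h3 : singleStable G c ≠ singleStable G a := by
      intro h'
      have := congrArg Subtype.val h'
      simp [singleStable] at this
      exact hca this.symm
    rw [if_neg h1, if_neg h2, if_neg h3] at happ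
    omega
  rw [MvPolynomial.coeff_sub, XX_eq, XX_eq, MvPolynomial.coeff_monomial,
    MvPolynomial.coeff_monomial, if_pos rfl, if_neg hne] at h0
  simp at h0

lemma no_stable_four (hJL : idealJ K G = idealL K G)
    {i j k l : Fin d} (hij : i ≠ j) (hik : i ≠ k) (hil : i ≠ l)
    (hjk : j ≠ k) (hjl : j ≠ l) (hkl : k ≠ l)
    (nij : ¬ G.Adj i j) (nik : ¬ G.Adj i k) (nil : ¬ G.Adj i l)
    (njk : ¬ G.Adj j k) (njl : ¬ G.Adj j l) (nkl : ¬ G.Adj k l) : False := by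
  classical
  set A := pairSt (G := G) i j nij with hA
  set B := pairSt (G := G) k l nkl with hB
  set C := pairSt (G := G) i k nik with hC
  set D := pairSt (G := G) j l njl with hD
  have hJ : X A * X B - X C * X D ∈ idealJ K G := by
    apply Ideal.subset_span
    refine ⟨A, B, C, D, ?_, ?_, ?_, rfl⟩
    · show Disjoint ({i, j} : Finset (Fin d)) {k, l}
      rw [Finset.disjoint_left]
      intro w hw hw'
      simp only [Finset.mem_insert, Finset.mem_singleton] at hw hw'
      rcases hw with rfl | rfl <;> rcases hw' with rfl | rfl <;> tauto
    · show Disjoint ({i, k} : Finset (Fin d)) {j, l}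
      rw [Finset.disjoint_left]
      intro w hw hw'
      simp only [Finset.mem_insert, Finset.mem_singleton] at hw hw'
      rcases hw with rfl | rfl <;> rcases hw' with rfl | rfl <;> tauto
    · show ({i, j} : Finset (Fin d)) ∪ {k, l} = {i, k} ∪ {j, l}
      ext w
      simp only [Finset.mem_union, Finset.mem_insert, Finset.mem_singleton]
      tauto
  have hL : X A * X B - X C * X D ∈ idealL K G := hJL ▸ hJ
  have h0 := coeff_L_zero_pairs K A B (by rw [hA, pairSt_card hij]) (by rw [hB, pairSt_card hkl]) hL
  have hne : ¬ (Finsupp.single C 1 + Finsupp.single D 1 =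
      Finsupp.single A 1 + Finsupp.single B 1) := by
    intro h
    have happ := congrArg (fun g => g C) h
    rw [single_add_single_apply, single_add_single_apply, if_pos rfl] at happ
    have h1 : D ≠ C := pairSt_ne (fun h => hil h.symm) (fun h => hkl h.symm)
    have h2 : A ≠ C := pairSt_ne (fun h => hij h.symm) hjk
    have h3 : B ≠ C := pairSt_ne (fun h => hil h.symm) (fun h => hkl h.symm)
    rw [if_neg h1, if_neg h2, if_neg h3] at happ
    omega
  rw [MvPolynomial.coeff_sub, XX_eq, XX_eq, MvPolynomial.coeff_monomial,
    MvPolynomial.coeff_monomial, if_pos rfl, if_neg hne] at h0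
  simp at h0
end Aux

theorem idealJ_eq_idealL_iff {d : ℕ} (G : SimpleGraph (Fin d))
    (K : Type) [Field K] :
    idealJ K G = idealL K G ↔
      ∃ (t : ℕ) (P : Fin d → Fin t),
        (∀ u v : Fin d, G.Adj u v ↔ P u ≠ P v) ∧
        ∀ c : Fin t, (Finset.univ.filter (fun v => P v = c)).card ≤ 3 := by
  classical
  constructor
  · intro hJL
    let st : Setoid (Fin d) := ⟨fun u v => ¬ G.Adj u v,
      ⟨fun x => G.loopless.irrefl x, fun {x y} h h' => h h'.symm, fun {x y z} h1 h2 => by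
        by_cases hxy : x = y
        · subst hxy; exact h2
        · by_cases hyz : y = z
          · subst hyz; exact h1
          · intro hadj
            exact no_induced_P3 K hJL hxy hyz h1 h2 hadj⟩⟩
    haveI : DecidableEq (Quotient st) := Classical.decEq _
    refine ⟨Fintype.card (Quotient st),
      fun v => (Fintype.equivFin (Quotient st)) (Quotient.mk st v), ?_, ?_⟩
    · intro u v
      constructor
      · intro hadj heq
        have hq : Quotient.mk st u = Quotient.mk st v :=
          (Fintype.equivFin (Quotient st)).injective heq
        exact (Quotient.exact hq : ¬ G.Adj u v) hadj
      · intro hne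
        by_contra hnadj
        exact hne (congrArg (Fintype.equivFin (Quotient st))
          (Quotient.sound (hnadj : ¬ G.Adj u v)))
    · intro c0
      by_contra hgt
      push_neg at hgt
      obtain ⟨s4, hsub, hc4⟩ := Finset.exists_subset_card_eq
        (show 4 ≤ (Finset.univ.filter
          (fun v => (Fintype.equivFin (Quotient st)) (Quotient.mk st v) = c0)).card by omega)
      obtain ⟨a, t3, hat, hins, hc3⟩ := Finset.card_eq_succ.1 (show s4.card = 3 + 1 from hc4)
      obtain ⟨x, y, z, hxy, hxz, hyz, ht⟩ := Finset.card_eq_three.1 hc3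
      have hx3 : x ∈ t3 := by rw [ht]; simp
      have hy3 : y ∈ t3 := by rw [ht]; simp
      have hz3 : z ∈ t3 := by rw [ht]; simp
      have hax : a ≠ x := fun h => hat (h ▸ hx3)
      have hay : a ≠ y := fun h => hat (h ▸ hy3)
      have haz : a ≠ z := fun h => hat (h ▸ hz3)
      have ha4 : a ∈ s4 := by rw [← hins]; exact Finset.mem_insert_self a t3
      have hx4 : x ∈ s4 := by rw [← hins]; exact Finset.mem_insert_of_mem hx3
      have hy4 : y ∈ s4 := by rw [← hins]; exact Finset.mem_insert_of_mem hy3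
      have hz4 : z ∈ s4 := by rw [← hins]; exact Finset.mem_insert_of_mem hz3
      have hcol : ∀ w1 ∈ s4, ∀ w2 ∈ s4, ¬ G.Adj w1 w2 := by
        intro w1 h1 w2 h2 hadj
        have e1 := (Finset.mem_filter.1 (hsub h1)).2
        have e2 := (Finset.mem_filter.1 (hsub h2)).2
        exact (Quotient.exact
          ((Fintype.equivFin (Quotient st)).injective (e1.trans e2.symm)) :
            ¬ G.Adj w1 w2) hadj
      exact no_stable_four K hJL hax hay haz hxy hxz hyz
        (hcol a ha4 x hx4) (hcol a ha4 y hy4) (hcol a ha4 z hz4)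
        (hcol x hx4 y hy4) (hcol x hx4 z hz4) (hcol y hy4 z hz4)
  · rintro ⟨t, P, hP, hfib⟩
    exact le_antisymm (J_le_L K hP hfib) (L_le_J K)
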